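/- arXiv:math/0412408 — 2 statements merged into one kernel-verified Lean document; each statement's English description precedes it below -/
import Mathlib

section
/- For all z, w ∈ ℳ: if w ≠ z, or if w = z ∈ ℬ, then H(z, w) = H♭(z, w); and if w = z ∈ 𝒦, then H(z, w) = 0. -/
open Filter Topology

noncomputable section

namespace MaxPlus

variable {S : Type*}

/-- Weight of the path `p 0, p 1, ..., p n` for the kernel `A`. -/
def pathWeight (A : S → S → EReal) (p : ℕ → S) (n : ℕ) : EReal :=
  ∑ k ∈ Finset.range n, A (p k) (p (k + 1))

/-- The max-plus star kernel `A*`: supremum of weights of paths of length `≥ 0`. -/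
def star (A : S → S → EReal) (i j : S) : EReal :=
  ⨆ (n : ℕ) (p : ℕ → S) (_ : p 0 = i ∧ p n = j), pathWeight A p n

/-- The max-plus kernel `A⁺`: supremum of weights of paths of length `≥ 1`. -/
def plus (A : S → S → EReal) (i j : S) : EReal :=
  ⨆ (n : ℕ) (_ : 1 ≤ n) (p : ℕ → S) (_ : p 0 = i ∧ p n = j), pathWeight A p n

/-- `π` is a left super-harmonic row vector (with full support, being real valued). -/
def LeftSuperharmonic (A : S → S → EReal) (π : S → ℝ) : Prop :=
  ∀ j, (⨆ i, ((π i : EReal) + A i j)) ≤ (π j : EReal)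

/-- The Martin kernel `K_{ij} = A*_{ij} - π_j`. -/
def K (A : S → S → EReal) (π : S → ℝ) (i j : S) : EReal :=
  star A i j - (π j : EReal)

/-- `K♭_{ij} = A⁺_{ij} - π_j`. -/
def Kflat (A : S → S → EReal) (π : S → ℝ) (i j : S) : EReal :=
  plus A i j - (π j : EReal)

/-- The set `𝒦` of columns of the Martin kernel. -/
def kerCols (A : S → S → EReal) (π : S → ℝ) : Set (S → EReal) :=
  Set.range fun j => fun i => K A π i j

/-- The Martin space `ℳ`: closure of `𝒦` in the product topology. -/
def martin (A : S → S → EReal) (π : S → ℝ) : Set (S → EReal) :=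
  closure (kerCols A π)

/-- `μ_u(w)`: the limsup of `π_j + u_j` as `K_{·j} → w`. -/
def mu (A : S → S → EReal) (π : S → ℝ) (u : S → EReal) (w : S → EReal) : EReal :=
  ⨅ (W : Set (S → EReal)) (_ : W ∈ 𝓝 w),
    ⨆ (j : S) (_ : (fun i => K A π i j) ∈ W), ((π j : EReal) + u j)

/-- `w♭_i`: the liminf of `K♭_{ij}` as `K_{·j} → w`. -/
def flat (A : S → S → EReal) (π : S → ℝ) (w : S → EReal) (i : S) : EReal :=
  ⨆ (W : Set (S → EReal)) (_ : W ∈ 𝓝 w),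
    ⨅ (j : S) (_ : (fun i' => K A π i' j) ∈ W), Kflat A π i j

/-- The kernel `H(z,w) = μ_w(z)`. -/
def H (A : S → S → EReal) (π : S → ℝ) (z w : S → EReal) : EReal := mu A π w z

/-- The kernel `H♭(z,w) = μ_{w♭}(z)`. -/
def Hflat (A : S → S → EReal) (π : S → ℝ) (z w : S → EReal) : EReal :=
  mu A π (flat A π w) z

/-- The minimal Martin space `ℳᵐ = {w ∈ ℳ : H♭(w,w) = 0}`. -/
def martinMin (A : S → S → EReal) (π : S → ℝ) : Set (S → EReal) :=
  {w | w ∈ martin A π ∧ Hflat A π w w = 0}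

/-- The maximal circuit mean `ρ(A)`. -/
def maxCircuitMean (A : S → S → EReal) : EReal :=
  ⨆ (k : ℕ) (_ : 1 ≤ k) (p : ℕ → S) (_ : p k = p 0),
    (((k : ℝ)⁻¹ : ℝ) : EReal) * pathWeight A p k

/-- `α`-almost-geodesic with respect to the left super-harmonic vector `π`. -/
def IsAlmostGeodesic (A : S → S → EReal) (π : S → ℝ) (x : ℕ → S) : Prop :=
  ∃ α : ℝ, 0 ≤ α ∧ ∀ k : ℕ,
    (π (x k) : EReal) ≤ (α : EReal) + (π (x 0) : EReal) + pathWeight A x k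

/-- The set `𝒮` of `π`-integrable super-harmonic vectors. -/
def Sset (A : S → S → EReal) (π : S → ℝ) : Set (S → EReal) :=
  {u | (∀ i, u i ≠ ⊤) ∧ (∀ i, (⨆ j, A i j + u j) ≤ u i) ∧
    (⨆ j, ((π j : EReal) + u j)) < ⊤}

/-- The set `ℋ` of `π`-integrable harmonic vectors. -/
def Hset (A : S → S → EReal) (π : S → ℝ) : Set (S → EReal) :=
  {u | (∀ i, u i ≠ ⊤) ∧ (∀ i, (⨆ j, A i j + u j) = u i) ∧
    (⨆ j, ((π j : EReal) + u j)) < ⊤}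

/-- A vector is normalised if `sup_j (π_j + u_j) = 0`. -/
def Normalised (π : S → ℝ) (u : S → EReal) : Prop :=
  (⨆ j, ((π j : EReal) + u j)) = 0

/-- `ξ` is an extremal generator of `V`. -/
def ExtremalGen (V : Set (S → EReal)) (ξ : S → EReal) : Prop :=
  ξ ∈ V ∧ ξ ≠ (fun _ => (⊥ : EReal)) ∧
    ∀ u v, u ∈ V → v ∈ V → ξ = (fun i => u i ⊔ v i) → ξ = u ∨ ξ = v

end MaxPlus
namespace MaxPlus


section AuxLemmas

variable {S : Type*} (A : S → S → EReal) (π : S → ℝ)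

lemma pi_add_pathWeight_le (hπ : LeftSuperharmonic A π) (p : ℕ → S) (n : ℕ) :
    (π (p 0) : EReal) + pathWeight A p n ≤ (π (p n) : EReal) := by
  induction n with
  | zero => simp [pathWeight]
  | succ n ih =>
      have h1 : pathWeight A p (n+1) = pathWeight A p n + A (p n) (p (n+1)) :=
        Finset.sum_range_succ _ _
      rw [h1, ← add_assoc]
      refine le_trans (add_le_add_left ih _) (le_trans ?_ (hπ (p (n+1))))
      exact le_iSup (fun i => (π i : EReal) + A i (p (n+1))) (p n)

lemma star_le (hπ : LeftSuperharmonic A π) (j b : S) :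
    star A j b ≤ ((π b - π j : ℝ) : EReal) := by
  refine iSup_le fun n => iSup_le fun p => iSup_le fun hp => ?_
  have h := pi_add_pathWeight_le A π hπ p n
  rw [hp.1, hp.2] at h
  calc pathWeight A p n
      = ((-π j : ℝ) : EReal) + ((π j : EReal) + pathWeight A p n) := by
        rw [← add_assoc]; norm_cast; simp
    _ ≤ ((-π j : ℝ) : EReal) + (π b : EReal) := add_le_add_right h _
    _ = ((π b - π j : ℝ) : EReal) := by norm_cast; ring

lemma star_self_nonneg (b : S) : (0 : EReal) ≤ star A b b := by
  refine le_iSup_of_le 0 (le_iSup_of_le (fun _ => b) (le_iSup_of_le ⟨rfl, rfl⟩ ?_))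
  simp [pathWeight]

lemma plus_le_star (i j : S) : plus A i j ≤ star A i j :=
  iSup_le fun n => iSup_le fun _ => iSup_le fun p => iSup_le fun h =>
    le_iSup_of_le n (le_iSup_of_le p (le_iSup_of_le h le_rfl))

lemma star_eq_plus_of_ne {i j : S} (h : i ≠ j) : star A i j = plus A i j := by
  refine le_antisymm ?_ (plus_le_star A i j)
  refine iSup_le fun n => iSup_le fun p => iSup_le fun hp => ?_
  match n with
  | 0 => exact absurd (hp.1.symm.trans hp.2) h
  | m + 1 =>
      exact le_iSup_of_le (m+1) (le_iSup_of_le (Nat.succ_le_succ (Nat.zero_le m))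
        (le_iSup_of_le p (le_iSup_of_le hp le_rfl)))

lemma Kflat_le_K (i j : S) : Kflat A π i j ≤ K A π i j :=
  EReal.sub_le_sub (plus_le_star A i j) le_rfl

lemma pi_add_K_le (hπ : LeftSuperharmonic A π) (j b : S) :
    (π j : EReal) + K A π j b ≤ 0 := by
  calc (π j : EReal) + (star A j b - (π b : EReal))
      ≤ (π j : EReal) + (((π b - π j : ℝ) : EReal) - (π b : EReal)) :=
        add_le_add_right (EReal.sub_le_sub (star_le A π hπ j b) le_rfl) _
    _ = 0 := by norm_cast; ring

lemma zero_le_pi_add_K (b : S) : (0 : EReal) ≤ (π b : EReal) + K A π b b := by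
  calc (0 : EReal) = (π b : EReal) + (((0:ℝ) : EReal) - (π b : EReal)) := by norm_cast; ring
    _ ≤ (π b : EReal) + (star A b b - (π b : EReal)) :=
        add_le_add_right (EReal.sub_le_sub (by exact_mod_cast star_self_nonneg A b) le_rfl) _

lemma flat_le {w : S → EReal} (hw : w ∈ martin A π) (j : S) :
    flat A π w j ≤ w j := by
  refine iSup₂_le fun W hW => ?_
  refine le_of_forall_gt_imp_ge_of_dense fun c hc => ?_
  have hV : W ∩ {v : S → EReal | v j < c} ∈ 𝓝 w :=
    Filter.inter_mem hW (((isOpen_Iio.preimage (continuous_apply j))).mem_nhds hc)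
  obtain ⟨x, hxV, hxK⟩ := mem_closure_iff_nhds.mp hw _ hV
  obtain ⟨b, rfl⟩ := hxK
  refine le_trans (iInf₂_le b hxV.1) (le_trans (Kflat_le_K A π j b) ?_)
  exact le_of_lt hxV.2

lemma flat_ge {w : S → EReal} {j : S} (hne : w ≠ fun i => K A π i j) :
    w j ≤ flat A π w j := by
  refine le_of_forall_lt_imp_le_of_dense fun c hc => ?_
  have hWo : IsOpen (({fun i => K A π i j}ᶜ : Set (S → EReal)) ∩ {v | c < v j}) :=
    (isClosed_singleton.isOpen_compl).inter (isOpen_Ioi.preimage (continuous_apply j))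
  have hW : _ ∈ 𝓝 w := hWo.mem_nhds ⟨hne, hc⟩
  refine le_trans ?_ (le_iSup₂ _ hW)
  refine le_iInf₂ fun b hb => ?_
  have hjb : j ≠ b := by
    rintro rfl
    exact hb.1 rfl
  have hKeq : Kflat A π j b = K A π j b := by
    unfold Kflat K
    rw [star_eq_plus_of_ne A hjb]
  rw [hKeq]
  exact le_of_lt hb.2

lemma flat_eq {w : S → EReal} (hw : w ∈ martin A π) {j : S}
    (hne : w ≠ fun i => K A π i j) : flat A π w j = w j :=
  le_antisymm (flat_le A π hw j) (flat_ge A π hne)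

end AuxLemmas

/-- for `z, w ∈ ℳ`: if `w ≠ z`, or `w = z ∈ ℬ = ℳ ∖ 𝒦`, then
`H(z,w) = H♭(z,w)`; and if `w = z ∈ 𝒦`, then `H(z,w) = 0`. -/

theorem H_eq_Hflat_or_zero {S : Type*} (A : S → S → EReal)
    (hA : ∀ i j, A i j ≠ ⊤) (π : S → ℝ) (hπ : LeftSuperharmonic A π)
    (z w : S → EReal) (hz : z ∈ martin A π) (hw : w ∈ martin A π) :
    ((w ≠ z ∨ (w = z ∧ z ∈ martin A π \ kerCols A π)) →
      H A π z w = Hflat A π z w) ∧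
    ((w = z ∧ z ∈ kerCols A π) → H A π z w = 0) := by
  constructor
  · intro hcase
    rcases hcase with hne | ⟨heq, hzB⟩
    · -- w ≠ z
      have hzw : z ∈ ({w}ᶜ : Set (S → EReal)) := fun h => hne (Set.mem_singleton_iff.mp h).symm
      have hU : ({w}ᶜ : Set (S → EReal)) ∈ 𝓝 z := isClosed_singleton.isOpen_compl.mem_nhds hzw
      unfold H Hflat mu
      apply le_antisymm
      · refine le_iInf₂ fun W hW => ?_
        refine iInf₂_le_of_le (W ∩ {w}ᶜ) (Filter.inter_mem hW hU) ?_
        refine iSup₂_le fun j hj => ?_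
        have hwj : w ≠ fun i => K A π i j := fun h => hj.2 (Set.mem_singleton_iff.mpr h.symm)
        refine le_iSup₂_of_le j hj.1 ?_
        rw [flat_eq A π hw hwj]
      · refine le_iInf₂ fun W hW => iInf₂_le_of_le W hW (iSup₂_le fun j hj =>
          le_iSup₂_of_le j hj (add_le_add_right (flat_le A π hw j) _))
    · -- w = z ∈ ℬ
      have hfl : flat A π w = w := by
        funext j
        refine flat_eq A π hw fun hc => hzB.2 ?_
        exact ⟨j, hc.symm.trans heq⟩
      unfold H Hflat
      rw [hfl]
  · rintro ⟨heq, b, hb⟩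
    have hb' : (fun i => K A π i b) = z := hb
    unfold H mu
    apply le_antisymm
    · refine iInf₂_le_of_le Set.univ Filter.univ_mem (iSup₂_le fun j _ => ?_)
      have h := pi_add_K_le A π hπ j b
      rw [heq, ← hb']
      exact h
    · refine le_iInf₂ fun W hW => ?_
      have hzW : (fun i => K A π i b) ∈ W := hb' ▸ mem_of_mem_nhds hW
      refine le_trans ?_ (le_iSup₂ b hzW)
      have h := zero_le_pi_add_K A π b
      rw [heq, ← hb']
      exact h


end MaxPlus
end
end

section
/- Let u ∈ 𝒮 be a π-integrable super-harmonic vector, let (i_k)_{k≥0} be an almost-geodesic with respect to π, and suppose K_{·i_k} converges in the product topology to w ∈ ℳ. Then the sequence (π_{i_k} + u_{i_k})_{k≥0} converges and μ_u(w) = lim_{k→∞} (π_{i_k} + u_{i_k}) = lim_{k→∞} μ_u(K_{·i_k}). -/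
open Filter Topology

noncomputable section

namespace MaxPlus

section Helpers

variable {S : Type*}

lemma ereal_le_coe_of_forall {a : EReal} {s : ℝ} (h : ∀ q : ℝ, s < q → a ≤ (q : EReal)) :
    a ≤ (s : EReal) := by
  by_contra hc
  push_neg at hc
  obtain ⟨q, hq1, hq2⟩ := EReal.lt_iff_exists_real_btwn.1 hc
  exact absurd (h q (EReal.coe_lt_coe_iff.1 hq1)) (not_le.2 hq2)

lemma ereal_le_bot_of_forall {a : EReal} (h : ∀ q : ℝ, a ≤ (q : EReal)) : a ≤ ⊥ := by
  by_contra hc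
  push_neg at hc
  obtain ⟨q, _, hq2⟩ := EReal.lt_iff_exists_real_btwn.1 hc
  exact absurd (h (q - 1)) (not_le.2 (lt_trans (by exact_mod_cast sub_one_lt q) hq2))

lemma le_sub_of_forall_lt {a c d : EReal} (hc : c ≠ ⊤) (hd : d ≠ ⊥)
    (h : ∀ b : ℝ, (b : EReal) < d → a ≤ c - (b : EReal)) : a ≤ c - d := by
  induction c with
  | bot =>
    obtain ⟨b, hb⟩ := EReal.exists_between_coe_real hd.bot_lt
    simpa [EReal.bot_sub] using h b hb.2
  | coe s =>
    induction d with
    | bot => exact absurd rfl hd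
    | coe t =>
      rw [← EReal.coe_sub]
      refine ereal_le_coe_of_forall fun q hq => ?_
      have := h (s - q) (by exact_mod_cast (by linarith : s - q < t))
      rwa [← EReal.coe_sub, show s - (s - q) = q by ring] at this
    | top =>
      rw [EReal.sub_top]
      refine ereal_le_bot_of_forall fun q => ?_
      have := h (s - q) (EReal.coe_lt_top _)
      rwa [← EReal.coe_sub, show s - (s - q) = q by ring] at this
  | top => exact absurd rfl hc

lemma coe_add_ereal_sub_coe (a d : ℝ) (b : EReal) :
    (a : EReal) + b - (d : EReal) = ((a - d : ℝ) : EReal) + b := by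
  induction b with
  | bot => simp
  | coe r => norm_cast; ring
  | top => rw [EReal.coe_add_top, EReal.top_sub_coe, EReal.coe_add_top]

lemma ereal_sub_coe_add_coe (b : EReal) (e f : ℝ) :
    b - (e : EReal) + (f : EReal) = b + ((f - e : ℝ) : EReal) := by
  induction b with
  | bot => simp
  | coe r => norm_cast; ring
  | top => rw [EReal.top_sub_coe, EReal.top_add_coe, EReal.top_add_coe]

lemma ereal_add_coe_sub_coe (b : EReal) (e f : ℝ) :
    b + (e : EReal) - (f : EReal) = b + ((e - f : ℝ) : EReal) := by
  induction b with
  | bot => simp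
  | coe r => norm_cast; ring
  | top => rw [EReal.top_add_coe, EReal.top_sub_coe, EReal.top_add_coe]

lemma ereal_sub_neg_coe (b : EReal) (e : ℝ) : b - ((-e : ℝ) : EReal) = b + (e : EReal) := by
  induction b with
  | bot => simp
  | coe r => norm_cast; ring
  | top => rw [EReal.top_sub_coe, EReal.top_add_coe]

lemma pathWeight_zero (A : S → S → EReal) (p : ℕ → S) : pathWeight A p 0 = 0 :=
  Finset.sum_range_zero _

lemma pathWeight_succ (A : S → S → EReal) (p : ℕ → S) (n : ℕ) :
    pathWeight A p (n + 1) = pathWeight A p n + A (p n) (p (n + 1)) :=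
  Finset.sum_range_succ _ n

lemma pathWeight_split (A : S → S → EReal) (p : ℕ → S) (k m : ℕ) :
    pathWeight A p (k + m) = pathWeight A p k + pathWeight A (fun t => p (k + t)) m :=
  Finset.sum_range_add _ k m

lemma pathWeight_le_star {A : S → S → EReal} {p : ℕ → S} {n : ℕ} {i j : S}
    (h : p 0 = i ∧ p n = j) : pathWeight A p n ≤ star A i j :=
  le_iSup_of_le n (le_iSup_of_le p (le_iSup_of_le h le_rfl))

lemma pi_add_pathWeight {A : S → S → EReal} {π : S → ℝ} (hπ : LeftSuperharmonic A π)
    (p : ℕ → S) (n : ℕ) : (π (p 0) : EReal) + pathWeight A p n ≤ (π (p n) : EReal) := by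
  induction n with
  | zero => simp [pathWeight_zero]
  | succ n ih =>
    rw [pathWeight_succ, ← add_assoc]
    exact le_trans (add_le_add_left ih _)
      (le_trans (le_iSup (fun i => (π i : EReal) + A i (p (n + 1))) (p n)) (hπ (p (n + 1))))

lemma pathWeight_add_u {A : S → S → EReal} {u : S → EReal}
    (hsup : ∀ i, (⨆ j, A i j + u j) ≤ u i) (p : ℕ → S) (n : ℕ) :
    pathWeight A p n + u (p n) ≤ u (p 0) := by
  induction n with
  | zero => simp [pathWeight_zero]
  | succ n ih =>
    rw [pathWeight_succ, add_assoc]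
    exact le_trans (add_le_add_right
      (le_trans (le_iSup (fun j => A (p n) j + u j) (p (n + 1))) (hsup (p n))) _) ih

lemma star_le_pi {A : S → S → EReal} {π : S → ℝ} (hπ : LeftSuperharmonic A π) (i j : S) :
    star A i j ≤ (π j : EReal) - (π i : EReal) := by
  refine iSup_le fun n => iSup_le fun p => iSup_le fun h => ?_
  obtain ⟨h0, hn⟩ := h
  subst h0; subst hn
  exact (EReal.le_sub_iff_add_le (Or.inl (EReal.coe_ne_bot _))
    (Or.inl (EReal.coe_ne_top _))).2 (by rw [add_comm]; exact pi_add_pathWeight hπ p n)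

lemma K_le {A : S → S → EReal} {π : S → ℝ} (hπ : LeftSuperharmonic A π) (i j : S) :
    K A π i j ≤ ((-(π i) : ℝ) : EReal) := by
  calc K A π i j ≤ ((π j : EReal) - (π i : EReal)) - (π j : EReal) :=
        EReal.sub_le_sub (star_le_pi hπ i j) le_rfl
    _ = ((-(π i) : ℝ) : EReal) := by norm_cast; ring

lemma star_add_u_le {A : S → S → EReal} {u : S → EReal}
    (hsup : ∀ i, (⨆ j, A i j + u j) ≤ u i) (i j : S) (huj : u j ≠ ⊤) :
    star A i j + u j ≤ u i := by
  rcases eq_or_ne (u j) ⊥ with h | h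
  · rw [h, EReal.add_bot]; exact bot_le
  · obtain ⟨r, hr⟩ : ∃ r : ℝ, u j = (r : EReal) :=
      ⟨(u j).toReal, (EReal.coe_toReal huj h).symm⟩
    rw [hr]
    refine (EReal.le_sub_iff_add_le (Or.inl (EReal.coe_ne_bot r))
      (Or.inl (EReal.coe_ne_top r))).1 ?_
    refine iSup_le fun n => iSup_le fun p => iSup_le fun hp => ?_
    obtain ⟨h0, hn⟩ := hp; subst h0; subst hn
    refine (EReal.le_sub_iff_add_le (Or.inl (EReal.coe_ne_bot r))
      (Or.inl (EReal.coe_ne_top r))).2 ?_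
    have := pathWeight_add_u hsup p n
    rwa [hr] at this

lemma mu_le_sub {A : S → S → EReal} {π : S → ℝ} (hπ : LeftSuperharmonic A π) {u : S → EReal}
    (hutop : ∀ i, u i ≠ ⊤) (hsup : ∀ i, (⨆ j, A i j + u j) ≤ u i)
    (z : S → EReal) (i : S) (hz : z i ≠ ⊥) : mu A π u z ≤ u i - z i := by
  refine le_sub_of_forall_lt (hutop i) hz fun b hb => ?_
  have hWnhds : {y : S → EReal | (b : EReal) < y i} ∈ 𝓝 z :=
    (isOpen_lt continuous_const (continuous_apply i)).mem_nhds hb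
  refine le_trans (iInf₂_le _ hWnhds) (iSup_le fun j => iSup_le fun hj => ?_)
  have hj' : (b : EReal) < K A π i j := hj
  have hKub := K_le hπ i j
  obtain ⟨t, ht⟩ : ∃ t : ℝ, K A π i j = (t : EReal) :=
    ⟨(K A π i j).toReal, (EReal.coe_toReal (ne_top_of_le_ne_top (EReal.coe_ne_top _) hKub)
      (fun h => by simp [h] at hj')).symm⟩
  have hbt : b < t := EReal.coe_lt_coe_iff.1 (ht ▸ hj')
  have hstar : (t : EReal) + (π j : EReal) + u j ≤ u i := by
    have hKK : K A π i j + (π j : EReal) = star A i j := EReal.sub_add_cancel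
    rw [ht] at hKK
    calc (t : EReal) + (π j : EReal) + u j = star A i j + u j := by rw [hKK]
      _ ≤ u i := star_add_u_le hsup i j (hutop j)
  have h2 : (π j : EReal) + u j ≤ u i - (t : EReal) := by
    refine (EReal.le_sub_iff_add_le (Or.inl (EReal.coe_ne_bot t))
      (Or.inl (EReal.coe_ne_top t))).2 ?_
    calc (π j : EReal) + u j + (t : EReal) = (t : EReal) + (π j : EReal) + u j := by
          rw [add_comm ((π j : EReal) + u j), ← add_assoc]
      _ ≤ u i := hstar
  exact le_trans h2 (EReal.sub_le_sub le_rfl (le_of_lt (EReal.coe_lt_coe_iff.2 hbt)))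

end Helpers

/-- `μ_u` is continuous along almost-geodesics: if `u ∈ 𝒮`, `(i_k)` is an
almost-geodesic w.r.t. `π` and `K_{·i_k} → w ∈ ℳ`, then `π_{i_k} + u_{i_k}` converges and
`μ_u(w) = lim_k (π_{i_k} + u_{i_k}) = lim_k μ_u(K_{·i_k})`. -/
theorem mu_continuous_along_almostGeodesic {S : Type*} (A : S → S → EReal)
    (hA : ∀ i j, A i j ≠ ⊤) (π : S → ℝ) (hπ : LeftSuperharmonic A π)
    (u : S → EReal) (hu : u ∈ Sset A π)
    (x : ℕ → S) (hx : IsAlmostGeodesic A π x)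
    (w : S → EReal) (hw : w ∈ martin A π)
    (hconv : Tendsto (fun k => fun i => K A π i (x k)) atTop (𝓝 w)) :
    Tendsto (fun k => ((π (x k) : EReal) + u (x k))) atTop (𝓝 (mu A π u w)) ∧
    Tendsto (fun k => mu A π u (fun i => K A π i (x k))) atTop (𝓝 (mu A π u w)) := by
  obtain ⟨hutop, husup, huint⟩ := hu
  obtain ⟨α, hα0, hαx⟩ := hx
  have hWub : ∀ k, pathWeight A x k ≤ ((π (x k) - π (x 0) : ℝ) : EReal) := by
    intro k
    rw [EReal.coe_sub]
    exact (EReal.le_sub_iff_add_le (Or.inl (EReal.coe_ne_bot _))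
      (Or.inl (EReal.coe_ne_top _))).2 (by rw [add_comm]; exact pi_add_pathWeight hπ x k)
  have hWlb : ∀ k, ((π (x k) - (α + π (x 0)) : ℝ) : EReal) ≤ pathWeight A x k := by
    intro k
    rw [EReal.coe_sub]
    refine (EReal.sub_le_iff_le_add (Or.inl (EReal.coe_ne_bot _))
      (Or.inl (EReal.coe_ne_top _))).2 ?_
    rw [add_comm]
    calc (π (x k) : EReal) ≤ (α : EReal) + (π (x 0) : EReal) + pathWeight A x k := hαx k
      _ = ((α + π (x 0) : ℝ) : EReal) + pathWeight A x k := by rw [EReal.coe_add]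
  have hWne_top : ∀ k, pathWeight A x k ≠ ⊤ :=
    fun k => ne_top_of_le_ne_top (EReal.coe_ne_top _) (hWub k)
  have hWne_bot : ∀ k, pathWeight A x k ≠ ⊥ :=
    fun k => (lt_of_lt_of_le (EReal.bot_lt_coe _) (hWlb k)).ne'
  set r : ℕ → ℝ := fun k => (pathWeight A x k).toReal with hrdef
  have hW : ∀ k, pathWeight A x k = ((r k : ℝ) : EReal) :=
    fun k => (EReal.coe_toReal (hWne_top k) (hWne_bot k)).symm
  set c : ℕ → ℝ := fun k => π (x k) - π (x 0) - r k with hcdef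
  have hc_le : ∀ k, c k ≤ α := by
    intro k
    have h := hWlb k; rw [hW k, EReal.coe_le_coe_iff] at h
    simp only [hcdef]; linarith
  have hc0 : ∀ k, 0 ≤ c k := by
    intro k
    have h := hWub k; rw [hW k, EReal.coe_le_coe_iff] at h
    simp only [hcdef]; linarith
  have hseg : ∀ k l, k ≤ l →
      pathWeight A (fun t => x (k + t)) (l - k) = ((r l - r k : ℝ) : EReal) := by
    intro k l hkl
    have hsplit := pathWeight_split A x k (l - k)
    rw [Nat.add_sub_cancel' hkl, hW k, hW l] at hsplit
    rw [EReal.coe_sub, hsplit, add_comm ((r k : ℝ) : EReal), EReal.add_sub_cancel_right]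
  have hseg_pi : ∀ k l, k ≤ l → r l - r k ≤ π (x l) - π (x k) := by
    intro k l hkl
    have h1 := pi_add_pathWeight hπ (fun t => x (k + t)) (l - k)
    simp only [Nat.add_zero, Nat.add_sub_cancel' hkl] at h1
    rw [hseg k l hkl, ← EReal.coe_add, EReal.coe_le_coe_iff] at h1
    linarith
  have hc_mono : Monotone c := by
    intro k l hkl
    have := hseg_pi k l hkl
    simp only [hcdef]; linarith
  have hbdd : BddAbove (Set.range c) := ⟨α, fun y hy => by obtain ⟨k, rfl⟩ := hy; exact hc_le k⟩
  set cl : ℝ := ⨆ k, c k with hcldef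
  have hc_tend : Tendsto c atTop (𝓝 cl) := tendsto_atTop_ciSup hc_mono hbdd
  have hc_le_cl : ∀ k, c k ≤ cl := fun k => le_ciSup hbdd k
  set β : ℕ → EReal := fun k => (π (x k) : EReal) + u (x k) with hβdef
  set γ : ℕ → EReal := fun k => β k - ((c k : ℝ) : EReal) with hγdef
  have hβγ : ∀ k, β k = γ k + ((c k : ℝ) : EReal) := fun k => (EReal.sub_add_cancel).symm
  have hkey : ∀ k l, k ≤ l → β l ≤ β k + ((c l - c k : ℝ) : EReal) := by
    intro k l hkl
    have h1 := pathWeight_add_u husup (fun t => x (k + t)) (l - k)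
    simp only [Nat.add_zero, Nat.add_sub_cancel' hkl] at h1
    rw [hseg k l hkl] at h1
    have hreal : π (x l) = (π (x k) + (r l - r k)) + (c l - c k) := by
      simp only [hcdef]; ring
    have hβl : β l = (((π (x k) + (r l - r k)) : ℝ) : EReal) + u (x l)
        + ((c l - c k : ℝ) : EReal) := by
      show (π (x l) : EReal) + u (x l) = _
      rw [hreal, EReal.coe_add, add_right_comm]
    rw [hβl]
    refine add_le_add_left ?_ _
    rw [EReal.coe_add, add_assoc]
    exact add_le_add_right h1 _
  have hγ_anti : Antitone γ := by
    intro k l hkl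
    calc γ l ≤ (β k + ((c l - c k : ℝ) : EReal)) - ((c l : ℝ) : EReal) :=
          EReal.sub_le_sub (hkey k l hkl) le_rfl
      _ = β k + ((c l - c k - c l : ℝ) : EReal) := ereal_add_coe_sub_coe _ _ _
      _ = β k + ((-(c k) : ℝ) : EReal) := by rw [show c l - c k - c l = -(c k) from by ring]
      _ = γ k := by
          simp only [hγdef]
          rw [sub_eq_add_neg, ← EReal.coe_neg]
  have hγ_tend : Tendsto γ atTop (𝓝 (⨅ k, γ k)) := tendsto_atTop_iInf hγ_anti
  set G : EReal := ⨅ k, γ k with hGdef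
  set L : EReal := G + ((cl : ℝ) : EReal) with hLdef
  have hβ_tend : Tendsto β atTop (𝓝 L) := by
    have h1 : Tendsto (fun k => ((c k : ℝ) : EReal)) atTop (𝓝 ((cl : ℝ) : EReal)) :=
      EReal.tendsto_coe.2 hc_tend
    have h2 : Tendsto (fun k => (γ k, ((c k : ℝ) : EReal))) atTop
        (𝓝 (G, ((cl : ℝ) : EReal))) := hγ_tend.prodMk_nhds h1
    have h3 := (EReal.continuousAt_add (p := (G, ((cl : ℝ) : EReal)))
      (Or.inr (EReal.coe_ne_bot _)) (Or.inr (EReal.coe_ne_top _))).tendsto.comp h2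
    exact h3.congr fun k => (hβγ k).symm
  have hK_lb : ∀ k l, k ≤ l →
      (((r l - r k - π (x l)) : ℝ) : EReal) ≤ K A π (x k) (x l) := by
    intro k l hkl
    have hstar : ((r l - r k : ℝ) : EReal) ≤ star A (x k) (x l) := by
      rw [← hseg k l hkl]
      exact pathWeight_le_star ⟨rfl, congrArg x (Nat.add_sub_cancel' hkl)⟩
    calc (((r l - r k - π (x l)) : ℝ) : EReal)
        = ((r l - r k : ℝ) : EReal) - ((π (x l) : ℝ) : EReal) := by rw [← EReal.coe_sub]
      _ ≤ star A (x k) (x l) - (π (x l) : EReal) := EReal.sub_le_sub hstar le_rfl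
      _ = K A π (x k) (x l) := rfl
  have hw_lb : ∀ k, ((-(π (x k)) - (cl - c k) : ℝ) : EReal) ≤ w (x k) := by
    intro k
    have hKt : Tendsto (fun l => K A π (x k) (x l)) atTop (𝓝 (w (x k))) :=
      tendsto_pi_nhds.1 hconv (x k)
    have hbt : Tendsto (fun l => ((-(π (x k)) - (c l - c k) : ℝ) : EReal)) atTop
        (𝓝 ((-(π (x k)) - (cl - c k) : ℝ) : EReal)) :=
      EReal.tendsto_coe.2 (Tendsto.sub tendsto_const_nhds (hc_tend.sub tendsto_const_nhds))
    refine le_of_tendsto_of_tendsto hbt hKt ?_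
    filter_upwards [eventually_ge_atTop k] with l hl
    have h := hK_lb k l hl
    rwa [show r l - r k - π (x l) = -(π (x k)) - (c l - c k) from by
      simp only [hcdef]; ring] at h
  have hwbot : ∀ k, w (x k) ≠ ⊥ := fun k => (lt_of_lt_of_le (EReal.bot_lt_coe _) (hw_lb k)).ne'
  have hmu_le : ∀ k, mu A π u w ≤ γ k + ((cl : ℝ) : EReal) := by
    intro k
    calc mu A π u w ≤ u (x k) - w (x k) := mu_le_sub hπ hutop husup w (x k) (hwbot k)
      _ ≤ u (x k) - ((-(π (x k)) - (cl - c k) : ℝ) : EReal) :=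
          EReal.sub_le_sub le_rfl (hw_lb k)
      _ = u (x k) + ((π (x k) + (cl - c k) : ℝ) : EReal) := by
          rw [show (-(π (x k)) - (cl - c k) : ℝ) = -(π (x k) + (cl - c k)) from by ring,
            ereal_sub_neg_coe]
      _ = γ k + ((cl : ℝ) : EReal) := by
          simp only [hγdef, hβdef]
          rw [ereal_sub_coe_add_coe, add_comm ((π (x k) : ℝ) : EReal) (u (x k)), add_assoc,
            ← EReal.coe_add]
  have hmuL : mu A π u w ≤ L := by
    have h1 : ∀ k, mu A π u w - ((cl : ℝ) : EReal) ≤ γ k :=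
      fun k => EReal.sub_le_of_le_add (hmu_le k)
    exact (EReal.sub_le_iff_le_add (Or.inl (EReal.coe_ne_bot _))
      (Or.inl (EReal.coe_ne_top _))).1 (le_iInf h1)
  have hLmu : L ≤ mu A π u w := by
    refine le_iInf fun W => le_iInf fun hW => ?_
    refine le_of_tendsto hβ_tend ?_
    filter_upwards [hconv hW] with k hk
    exact le_iSup₂ (f := fun j (_ : (fun i => K A π i j) ∈ W) => ((π j : EReal) + u j)) (x k) hk
  have hmueq : mu A π u w = L := le_antisymm hmuL hLmu
  rw [hmueq]
  constructor
  · exact hβ_tend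
  · set m : ℕ → EReal := fun l => mu A π u (fun i => K A π i (x l)) with hmdef
    have h_lower : ∀ l, β l ≤ m l := by
      intro l
      refine le_iInf fun W => le_iInf fun hW => ?_
      exact le_iSup₂ (f := fun j (_ : (fun i => K A π i j) ∈ W) => ((π j : EReal) + u j)) (x l)
        (show (fun i => K A π i (x l)) ∈ W from mem_of_mem_nhds hW)
    have h_upper : ∀ k l, k ≤ l → m l ≤ γ k + ((cl : ℝ) : EReal) := by
      intro k l hkl
      have hzbot : K A π (x k) (x l) ≠ ⊥ :=
        (lt_of_lt_of_le (EReal.bot_lt_coe _) (hK_lb k l hkl)).ne'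
      calc m l ≤ u (x k) - K A π (x k) (x l) := mu_le_sub hπ hutop husup _ (x k) hzbot
        _ ≤ u (x k) - (((r l - r k - π (x l)) : ℝ) : EReal) :=
            EReal.sub_le_sub le_rfl (hK_lb k l hkl)
        _ = u (x k) + ((π (x k) + (c l - c k) : ℝ) : EReal) := by
            rw [show (r l - r k - π (x l) : ℝ) = -(π (x k) + (c l - c k)) from by
              simp only [hcdef]; ring, ereal_sub_neg_coe]
        _ ≤ u (x k) + ((π (x k) + (cl - c k) : ℝ) : EReal) :=
            add_le_add_right (EReal.coe_le_coe_iff.2 (by have := hc_le_cl l; linarith)) _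
        _ = γ k + ((cl : ℝ) : EReal) := by
            simp only [hγdef, hβdef]
            rw [ereal_sub_coe_add_coe, add_comm ((π (x k) : ℝ) : EReal) (u (x k)), add_assoc,
              ← EReal.coe_add]
    have hls : Filter.limsup m atTop ≤ L := by
      have h1 : ∀ k, Filter.limsup m atTop ≤ γ k + ((cl : ℝ) : EReal) := by
        intro k
        refine Filter.limsup_le_of_le (by isBoundedDefault) ?_
        filter_upwards [eventually_ge_atTop k] with l hl using h_upper k l hl
      have h2 : ∀ k, Filter.limsup m atTop - ((cl : ℝ) : EReal) ≤ γ k :=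
        fun k => EReal.sub_le_of_le_add (h1 k)
      exact (EReal.sub_le_iff_le_add (Or.inl (EReal.coe_ne_bot _))
        (Or.inl (EReal.coe_ne_top _))).1 (le_iInf h2)
    have hli : L ≤ Filter.liminf m atTop := by
      rw [← hβ_tend.liminf_eq]
      exact Filter.liminf_le_liminf (Eventually.of_forall h_lower)
    have h3 : Filter.liminf m atTop ≤ Filter.limsup m atTop := Filter.liminf_le_limsup
    exact tendsto_of_liminf_eq_limsup (le_antisymm (le_trans h3 hls) hli)
      (le_antisymm hls (le_trans hli h3))

end MaxPlus
end
end
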